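/- In particular, ∫_{-1}^1 C_{l₁}^λ(t) · C_{l₂}^{λ+1}(t) · (1-t²)^{λ+1/2} dt = 0 whenever l₂ ≠ l₁ and l₂ ≠ l₁ - 2, for λ > 0. -/

import Mathlib

open Real Finset

noncomputable def gcoef (mu : ℝ) (l k : ℕ) : ℝ :=
  (-1 : ℝ) ^ k * Real.Gamma (mu + l - k) /
      (Real.Gamma mu * (Nat.factorial k) * (Nat.factorial (l - 2 * k)))

/-- The Gegenbauer polynomial `C_l^λ(t)`, via its standard explicit formula
(equivalent to the generating-function definition
`∑ C_l^λ(t) r^l = (1 - 2tr + r²)^(-λ)`). -/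
noncomputable def gegenbauer (lam : ℝ) (l : ℕ) (t : ℝ) : ℝ :=
  ∑ k ∈ Finset.range (l / 2 + 1),
    (-1 : ℝ) ^ k * Real.Gamma (lam + l - k) /
      (Real.Gamma lam * (Nat.factorial k) * (Nat.factorial (l - 2 * k))) *
      (2 * t) ^ (l - 2 * k)

lemma gegenbauer_eq (mu : ℝ) (l : ℕ) (t : ℝ) :
    gegenbauer mu l t = ∑ k ∈ Finset.range (l / 2 + 1), gcoef mu l k * (2 * t) ^ (l - 2 * k) :=
  rfl

noncomputable def gderiv (mu : ℝ) (l : ℕ) (t : ℝ) : ℝ :=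
  ∑ k ∈ Finset.range (l / 2 + 1),
    gcoef mu l k * (((l - 2 * k : ℕ) : ℝ) * (2 * t) ^ (l - 2 * k - 1) * 2)

noncomputable def gderiv2 (mu : ℝ) (l : ℕ) (t : ℝ) : ℝ :=
  ∑ k ∈ Finset.range (l / 2 + 1),
    gcoef mu l k * (((l - 2 * k : ℕ) : ℝ) *
      (((l - 2 * k - 1 : ℕ) : ℝ) * (2 * t) ^ (l - 2 * k - 1 - 1) * 2) * 2)

lemma hasDerivAt_gegenbauer (mu : ℝ) (l : ℕ) (t : ℝ) :
    HasDerivAt (gegenbauer mu l) (gderiv mu l t) t := by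
  have : HasDerivAt (fun t : ℝ => ∑ k ∈ Finset.range (l / 2 + 1), gcoef mu l k * (2 * t) ^ (l - 2 * k))
      (gderiv mu l t) t := by
    apply HasDerivAt.fun_sum
    intro k _
    simpa [mul_comm, mul_assoc, mul_left_comm] using
      ((((hasDerivAt_id t).const_mul 2).pow (l - 2 * k)).const_mul (gcoef mu l k))
  exact this

lemma hasDerivAt_gderiv (mu : ℝ) (l : ℕ) (t : ℝ) :
    HasDerivAt (gderiv mu l) (gderiv2 mu l t) t := by
  apply HasDerivAt.fun_sum
  intro k _
  simpa [mul_comm, mul_assoc, mul_left_comm] using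
    (((((hasDerivAt_id t).const_mul 2).pow (l - 2 * k - 1)).const_mul
      ((l - 2 * k : ℕ) : ℝ)).mul_const 2).const_mul (gcoef mu l k)

lemma continuous_gegenbauer (mu : ℝ) (l : ℕ) : Continuous (gegenbauer mu l) := by
  unfold gegenbauer
  exact continuous_finset_sum _ fun k _ =>
    (continuous_const.mul ((continuous_const.mul continuous_id).pow _))

lemma continuous_gderiv (mu : ℝ) (l : ℕ) : Continuous (gderiv mu l) := by
  unfold gderiv
  exact continuous_finset_sum _ fun k _ => continuous_const.mul
    ((continuous_const.mul (((continuous_const.mul continuous_id).pow _))).mul continuous_const)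

lemma continuous_weight {p : ℝ} (hp : 0 ≤ p) :
    Continuous (fun t : ℝ => (1 - t ^ 2) ^ p) := by
  apply Continuous.rpow_const (by continuity)
  exact fun x => Or.inr hp

lemma gcoef_rec (mu : ℝ) (hmu : 0 < mu) (l k : ℕ) (hk : k + 1 ≤ l / 2) :
    gcoef mu l k * (((l - 2 * k : ℕ) : ℝ) * ((l - 2 * k - 1 : ℕ) : ℝ))
      = -(((k : ℝ) + 1) * ((l : ℝ) - (k : ℝ) - 1 + mu) * gcoef mu l (k + 1)) := by
  have h2 : 2 * (k + 1) ≤ l := by omega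
  have hlk : (k : ℝ) + 1 ≤ l := by exact_mod_cast (by omega : k + 1 ≤ l)
  have hx0 : (mu + (l : ℝ) - k - 1 : ℝ) ≠ 0 := by nlinarith
  have hG : Real.Gamma (mu + l - k) = (mu + (l : ℝ) - k - 1) * Real.Gamma (mu + l - (k + 1 : ℕ)) := by
    have h := Real.Gamma_add_one hx0
    rw [show mu + (l : ℝ) - k - 1 + 1 = mu + (l : ℝ) - k by ring] at h
    rw [h, show (mu + (l : ℝ) - ((k : ℕ) + 1 : ℕ)) = mu + (l : ℝ) - k - 1 by push_cast; ring]
  have hfac : ((l - 2 * k).factorial : ℝ)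
      = ((l - 2 * k : ℕ) : ℝ) * (((l - 2 * k - 1 : ℕ) : ℝ) * ((l - 2 * (k + 1)).factorial : ℝ)) := by
    have e1 : l - 2 * k = (l - 2 * (k + 1)) + 1 + 1 := by omega
    have e2 : l - 2 * k - 1 = (l - 2 * (k + 1)) + 1 := by omega
    rw [e1]
    simp [Nat.factorial_succ]
  have hGmu : Real.Gamma mu ≠ 0 := (Real.Gamma_pos_of_pos hmu).ne'
  have hf1 : ((k.factorial : ℝ)) ≠ 0 := by exact_mod_cast k.factorial_ne_zero
  have hf2 : (((l - 2 * (k + 1)).factorial : ℝ)) ≠ 0 := by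
    exact_mod_cast (l - 2 * (k + 1)).factorial_ne_zero
  have hm1 : ((l - 2 * k : ℕ) : ℝ) ≠ 0 := by
    have : (0 : ℕ) < l - 2 * k := by omega
    exact_mod_cast this.ne'
  have hm2 : ((l - 2 * k - 1 : ℕ) : ℝ) ≠ 0 := by
    have : (0 : ℕ) < l - 2 * k - 1 := by omega
    exact_mod_cast this.ne'
  unfold gcoef
  rw [hG, hfac, Nat.factorial_succ (k)]
  push_cast
  field_simp
  ring

/-- per-term decomposition of the Gegenbauer ODE -/
lemma ode_term (mu : ℝ) (l k : ℕ) (hk : k ≤ l / 2) (t : ℝ) :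
    (1 - t ^ 2) * (gcoef mu l k * (((l - 2 * k : ℕ) : ℝ) *
        (((l - 2 * k - 1 : ℕ) : ℝ) * (2 * t) ^ (l - 2 * k - 1 - 1) * 2) * 2))
      - (2 * mu + 1) * t * (gcoef mu l k * (((l - 2 * k : ℕ) : ℝ) * (2 * t) ^ (l - 2 * k - 1) * 2))
      + (l : ℝ) * ((l : ℝ) + 2 * mu) * (gcoef mu l k * (2 * t) ^ (l - 2 * k))
  = gcoef mu l k * (4 * (k : ℝ) * ((l : ℝ) - (k : ℝ) + mu)) * (2 * t) ^ (l - 2 * k)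
    + gcoef mu l k * (4 * ((l - 2 * k : ℕ) : ℝ) * ((l - 2 * k - 1 : ℕ) : ℝ))
        * (2 * t) ^ (l - 2 * k - 2) := by
  have h2k : 2 * k ≤ l := by omega
  rcases Nat.lt_or_ge (l - 2 * k) 2 with hm | hm
  · rcases (by omega : l - 2 * k = 0 ∨ l - 2 * k = 1) with h | h
    · have hl : (l : ℝ) = 2 * k := by exact_mod_cast (by omega : l = 2 * k)
      rw [h]; norm_num; rw [hl]; ring
    · have hl : (l : ℝ) = 2 * k + 1 := by exact_mod_cast (by omega : l = 2 * k + 1)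
      rw [h]; norm_num; rw [hl]; ring
  · obtain ⟨m, hm2⟩ : ∃ m, l - 2 * k = m + 2 := ⟨l - 2 * k - 2, by omega⟩
    have hl : (l : ℝ) = (m : ℝ) + 2 + 2 * k := by exact_mod_cast (by omega : l = m + 2 + 2 * k)
    rw [hm2, show m + 2 - 1 - 1 = m by omega, show m + 2 - 1 = m + 1 by omega,
      show m + 2 - 2 = m by omega]
    push_cast
    rw [hl, pow_add, pow_add]
    ring

lemma tele (n : ℕ) (f g : ℕ → ℝ) (h0 : f 0 = 0) (hlast : g n = 0)
    (hstep : ∀ k < n, g k = - f (k + 1)) :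
    ∑ k ∈ Finset.range (n + 1), (f k + g k) = 0 := by
  rw [Finset.sum_add_distrib, Finset.sum_range_succ' f n, Finset.sum_range_succ g n, h0, hlast,
    add_zero, add_zero]
  rw [Finset.sum_congr rfl (fun i hi =>
    (by rw [hstep i (Finset.mem_range.mp hi)] : g i = - f (i + 1)))]
  rw [Finset.sum_neg_distrib]
  ring

lemma gegenbauer_ode (mu : ℝ) (hmu : 0 < mu) (l : ℕ) (t : ℝ) :
    (1 - t ^ 2) * gderiv2 mu l t - (2 * mu + 1) * t * gderiv mu l t
      + (l : ℝ) * ((l : ℝ) + 2 * mu) * gegenbauer mu l t = 0 := by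
  unfold gderiv2 gderiv
  rw [gegenbauer_eq, Finset.mul_sum, Finset.mul_sum, Finset.mul_sum,
    ← Finset.sum_sub_distrib, ← Finset.sum_add_distrib]
  rw [Finset.sum_congr rfl (fun k hk =>
    ode_term mu l k (Nat.lt_succ_iff.mp (Finset.mem_range.mp hk)) t)]
  apply tele (l / 2)
  · simp
  · rcases (by omega : l - 2 * (l / 2) = 0 ∨ l - 2 * (l / 2) - 1 = 0) with h | h <;> rw [h] <;> simp
  · intro k hk
    have hrec := gcoef_rec mu hmu l k hk
    have hexp : l - 2 * (k + 1) = l - 2 * k - 2 := by omega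
    rw [hexp]
    push_cast
    linear_combination (4 * (2 * t) ^ (l - 2 * k - 2)) * hrec

/-- Orthogonality of Gegenbauer polynomials of the same order `mu > 1`. -/
lemma gegenbauer_orth (mu : ℝ) (hmu : 1 < mu) (m n : ℕ) (hmn : m ≠ n) :
    ∫ t in (-1 : ℝ)..1,
      gegenbauer mu m t * gegenbauer mu n t * (1 - t ^ 2) ^ (mu - 1 / 2 : ℝ) = 0 := by
  have hmu0 : (0 : ℝ) < mu := by linarith
  set W : ℝ → ℝ := fun t => (1 - t ^ 2) ^ (mu + 1 / 2 : ℝ) *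
    (gegenbauer mu m t * gderiv mu n t - gegenbauer mu n t * gderiv mu m t) with hW
  have hderiv : ∀ t ∈ Set.Ioo (-1 : ℝ) 1, HasDerivAt W
      (((m : ℝ) * ((m : ℝ) + 2 * mu) - (n : ℝ) * ((n : ℝ) + 2 * mu)) *
        (gegenbauer mu m t * gegenbauer mu n t * (1 - t ^ 2) ^ (mu - 1 / 2 : ℝ))) t := by
    intro t ht
    have h1t : (0 : ℝ) < 1 - t ^ 2 := by nlinarith [ht.1, ht.2]
    have hbase : HasDerivAt (fun t : ℝ => 1 - t ^ 2) (-(2 * t)) t := by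
      simpa using (hasDerivAt_pow 2 t).const_sub 1
    have hw : HasDerivAt (fun t : ℝ => (1 - t ^ 2) ^ (mu + 1 / 2 : ℝ))
        ((mu + 1 / 2) * (1 - t ^ 2) ^ (mu - 1 / 2 : ℝ) * (-(2 * t))) t := by
      have h := hbase.rpow_const (p := mu + 1 / 2) (Or.inl h1t.ne')
      convert h using 1
      rw [show (mu + 1 / 2 - 1 : ℝ) = mu - 1 / 2 by ring]
      ring
    have hV : HasDerivAt (fun t => gegenbauer mu m t * gderiv mu n t
        - gegenbauer mu n t * gderiv mu m t)
        ((gderiv mu m t * gderiv mu n t + gegenbauer mu m t * gderiv2 mu n t)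
          - (gderiv mu n t * gderiv mu m t + gegenbauer mu n t * gderiv2 mu m t)) t :=
      (((hasDerivAt_gegenbauer mu m t).mul (hasDerivAt_gderiv mu n t)).sub
        ((hasDerivAt_gegenbauer mu n t).mul (hasDerivAt_gderiv mu m t)))
    have hprod := hw.mul hV
    refine hprod.congr_deriv (Eq.symm ?_)
    have hq : (1 - t ^ 2) ^ (mu + 1 / 2 : ℝ) = (1 - t ^ 2) * (1 - t ^ 2) ^ (mu - 1 / 2 : ℝ) := by
      rw [show (mu + 1 / 2 : ℝ) = 1 + (mu - 1 / 2) by ring, Real.rpow_add h1t, Real.rpow_one]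
    have hodem := gegenbauer_ode mu hmu0 m t
    have hoden := gegenbauer_ode mu hmu0 n t
    rw [hq]
    linear_combination (-((1 - t ^ 2) ^ (mu - 1 / 2 : ℝ) * gegenbauer mu m t)) * hoden
      + ((1 - t ^ 2) ^ (mu - 1 / 2 : ℝ) * gegenbauer mu n t) * hodem
  have hcont : ContinuousOn W (Set.Icc (-1 : ℝ) 1) := by
    apply Continuous.continuousOn
    exact (continuous_weight (by linarith)).mul
      (((continuous_gegenbauer mu m).mul (continuous_gderiv mu n)).sub
        ((continuous_gegenbauer mu n).mul (continuous_gderiv mu m)))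
  have hFc : Continuous (fun t : ℝ =>
      ((m : ℝ) * ((m : ℝ) + 2 * mu) - (n : ℝ) * ((n : ℝ) + 2 * mu)) *
        (gegenbauer mu m t * gegenbauer mu n t * (1 - t ^ 2) ^ (mu - 1 / 2 : ℝ))) :=
    continuous_const.mul (((continuous_gegenbauer mu m).mul (continuous_gegenbauer mu n)).mul
      (continuous_weight (by linarith)))
  have hftc := intervalIntegral.integral_eq_sub_of_hasDerivAt_of_le (by norm_num : (-1 : ℝ) ≤ 1)
    hcont hderiv (hFc.intervalIntegrable _ _)
  have hz : (1 : ℝ) - 1 ^ 2 = 0 := by norm_num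
  have hz' : (1 : ℝ) - (-1) ^ 2 = 0 := by norm_num
  have hrp := Real.zero_rpow (show (mu + 1 / 2 : ℝ) ≠ 0 by positivity)
  have hW1 : W 1 = 0 := by simp only [hW, hz, hrp, zero_mul]
  have hWm1 : W (-1) = 0 := by simp only [hW, hz', hrp, zero_mul]
  rw [hW1, hWm1, sub_zero, intervalIntegral.integral_const_mul] at hftc
  have hne : ((m : ℝ) * ((m : ℝ) + 2 * mu) - (n : ℝ) * ((n : ℝ) + 2 * mu)) ≠ 0 := by
    have key : ∀ a b : ℕ, a < b → (a : ℝ) * ((a : ℝ) + 2 * mu) < (b : ℝ) * ((b : ℝ) + 2 * mu) := by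
      intro a b hab
      have : (a : ℝ) < b := by exact_mod_cast hab
      nlinarith [Nat.cast_nonneg (α := ℝ) a]
    rcases hmn.lt_or_gt with h | h
    · exact sub_ne_zero.mpr (key m n h).ne
    · exact sub_ne_zero.mpr (key n m h).ne'
  exact (mul_eq_zero.mp hftc).resolve_left hne

lemma contig_coef (lam : ℝ) (hlam : 0 < lam) (l k : ℕ) (hl : 2 ≤ l) (hk : k + 1 ≤ l / 2) :
    (lam + (l : ℝ)) * gcoef lam l (k + 1)
      = lam * gcoef (lam + 1) l (k + 1) - lam * gcoef (lam + 1) (l - 2) k := by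
  have hkl : k + 1 ≤ l := by omega
  have hx0 : (0 : ℝ) < lam + (l : ℝ) - (k : ℝ) - 1 := by
    have : ((k : ℝ)) + 1 ≤ l := by exact_mod_cast hkl
    linarith
  have e1 : (lam + (l : ℝ) - ((k + 1 : ℕ) : ℝ)) = lam + (l : ℝ) - (k : ℝ) - 1 := by
    push_cast; ring
  have e2 : (lam + 1 + (l : ℝ) - ((k + 1 : ℕ) : ℝ)) = (lam + (l : ℝ) - (k : ℝ) - 1) + 1 := by
    push_cast; ring
  have e3 : (lam + 1 + ((l - 2 : ℕ) : ℝ) - (k : ℝ)) = lam + (l : ℝ) - (k : ℝ) - 1 := by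
    push_cast [hl]; ring
  have e4 : (l - 2) - 2 * k = l - 2 * (k + 1) := by omega
  have hG1 : Real.Gamma ((lam + (l : ℝ) - (k : ℝ) - 1) + 1)
      = (lam + (l : ℝ) - (k : ℝ) - 1) * Real.Gamma (lam + (l : ℝ) - (k : ℝ) - 1) :=
    Real.Gamma_add_one hx0.ne'
  have hGl : Real.Gamma (lam + 1) = lam * Real.Gamma lam := Real.Gamma_add_one hlam.ne'
  have hGne : Real.Gamma lam ≠ 0 := (Real.Gamma_pos_of_pos hlam).ne'
  have hf1 : ((k.factorial : ℝ)) ≠ 0 := by exact_mod_cast k.factorial_ne_zero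
  have hf2 : (((l - 2 * (k + 1)).factorial : ℝ)) ≠ 0 := by
    exact_mod_cast (l - 2 * (k + 1)).factorial_ne_zero
  unfold gcoef
  rw [e1, e2, e3, e4, hG1, hGl, Nat.factorial_succ k, pow_succ]
  push_cast
  field_simp
  ring
lemma contig (lam : ℝ) (hlam : 0 < lam) (l : ℕ) (hl : 2 ≤ l) (t : ℝ) :
    (lam + (l : ℝ)) * gegenbauer lam l t
      = lam * gegenbauer (lam + 1) l t - lam * gegenbauer (lam + 1) (l - 2) t := by
  have hrange : (l - 2) / 2 + 1 = l / 2 := by omega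
  rw [gegenbauer_eq, gegenbauer_eq, gegenbauer_eq, hrange, Finset.mul_sum, Finset.mul_sum,
    Finset.mul_sum]
  rw [Finset.sum_range_succ'
    (fun k => (lam + (l : ℝ)) * (gcoef lam l k * (2 * t) ^ (l - 2 * k))) (l / 2)]
  rw [Finset.sum_range_succ'
    (fun k => lam * (gcoef (lam + 1) l k * (2 * t) ^ (l - 2 * k))) (l / 2)]
  have h0 : (lam + (l : ℝ)) * (gcoef lam l 0 * (2 * t) ^ (l - 2 * 0))
      = lam * (gcoef (lam + 1) l 0 * (2 * t) ^ (l - 2 * 0)) := by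
    have hGl : Real.Gamma (lam + 1) = lam * Real.Gamma lam := Real.Gamma_add_one hlam.ne'
    have hGll : Real.Gamma (lam + 1 + (l : ℝ)) = (lam + (l : ℝ)) * Real.Gamma (lam + (l : ℝ)) := by
      rw [show (lam + 1 + (l : ℝ)) = (lam + (l : ℝ)) + 1 by ring]
      exact Real.Gamma_add_one
        (by nlinarith [Nat.cast_nonneg (α := ℝ) l] : (0 : ℝ) < lam + (l : ℝ)).ne'
    unfold gcoef
    simp only [Nat.cast_zero, sub_zero]
    rw [hGll, hGl]
    have hGne : Real.Gamma lam ≠ 0 := (Real.Gamma_pos_of_pos hlam).ne'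
    field_simp
  have hsum : ∑ k ∈ Finset.range (l / 2),
      (lam + (l : ℝ)) * (gcoef lam l (k + 1) * (2 * t) ^ (l - 2 * (k + 1)))
      = ∑ k ∈ Finset.range (l / 2),
        (lam * (gcoef (lam + 1) l (k + 1) * (2 * t) ^ (l - 2 * (k + 1)))
          - lam * (gcoef (lam + 1) (l - 2) k * (2 * t) ^ ((l - 2) - 2 * k))) := by
    apply Finset.sum_congr rfl
    intro k hk
    have hk' : k + 1 ≤ l / 2 := Finset.mem_range.mp hk
    have e4 : (l - 2) - 2 * k = l - 2 * (k + 1) := by omega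
    rw [e4]
    linear_combination ((2 * t) ^ (l - 2 * (k + 1))) * contig_coef lam hlam l k hl hk'
  rw [hsum, Finset.sum_sub_distrib, h0]
  ring

lemma contig_small (lam : ℝ) (hlam : 0 < lam) (l : ℕ) (hl : l < 2) (t : ℝ) :
    (lam + (l : ℝ)) * gegenbauer lam l t = lam * gegenbauer (lam + 1) l t := by
  have hGne : Real.Gamma lam ≠ 0 := (Real.Gamma_pos_of_pos hlam).ne'
  have hGne1 : Real.Gamma (lam + 1) ≠ 0 := (Real.Gamma_pos_of_pos (by linarith)).ne'
  have hGl : Real.Gamma (lam + 1) = lam * Real.Gamma lam := Real.Gamma_add_one hlam.ne'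
  have hGl2 : Real.Gamma (lam + 2) = (lam + 1) * Real.Gamma (lam + 1) := by
    rw [show lam + 2 = (lam + 1) + 1 by ring]
    exact Real.Gamma_add_one (by linarith)
  interval_cases l
  · simp [gegenbauer]
    left
    rw [div_self hGne, div_self hGne1]
  · simp [gegenbauer]
    rw [show lam + 1 + 1 = lam + 2 by ring, hGl2, hGl]
    field_simp

theorem gegenbauer_mixed_order_integral_vanishes (lam : ℝ) (hlam : 0 < lam)
    (l₁ l₂ : ℕ) (h₁ : l₂ ≠ l₁) (h₂ : l₂ + 2 ≠ l₁) :
    ∫ t in (-1 : ℝ)..1,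
        gegenbauer lam l₁ t * gegenbauer (lam + 1) l₂ t * (1 - t ^ 2) ^ (lam + 1 / 2 : ℝ) =
      0 := by
  have hne : (lam + (l₁ : ℝ)) ≠ 0 := by nlinarith [Nat.cast_nonneg (α := ℝ) l₁]
  have hmu : (1 : ℝ) < lam + 1 := by linarith
  have hexp : (lam + 1 / 2 : ℝ) = (lam + 1) - 1 / 2 := by ring
  have horth : ∀ a : ℕ, a ≠ l₂ → ∫ t in (-1 : ℝ)..1,
      gegenbauer (lam + 1) a t * gegenbauer (lam + 1) l₂ t * (1 - t ^ 2) ^ (lam + 1 / 2 : ℝ)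
        = 0 := by
    intro a ha
    rw [hexp]
    exact gegenbauer_orth (lam + 1) hmu a l₂ ha
  have hc : ∀ a : ℕ, Continuous (fun t : ℝ => lam *
      (gegenbauer (lam + 1) a t * gegenbauer (lam + 1) l₂ t
        * (1 - t ^ 2) ^ (lam + 1 / 2 : ℝ))) := fun a =>
    continuous_const.mul (((continuous_gegenbauer _ a).mul (continuous_gegenbauer _ l₂)).mul
      (continuous_weight (by linarith)))
  by_cases hl : 2 ≤ l₁
  · have key : (fun t : ℝ => (lam + (l₁ : ℝ)) * (gegenbauer lam l₁ t * gegenbauer (lam + 1) l₂ t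
        * (1 - t ^ 2) ^ (lam + 1 / 2 : ℝ)))
        = fun t : ℝ => lam * (gegenbauer (lam + 1) l₁ t * gegenbauer (lam + 1) l₂ t
            * (1 - t ^ 2) ^ (lam + 1 / 2 : ℝ))
          - lam * (gegenbauer (lam + 1) (l₁ - 2) t * gegenbauer (lam + 1) l₂ t
            * (1 - t ^ 2) ^ (lam + 1 / 2 : ℝ)) := by
      funext t
      linear_combination (gegenbauer (lam + 1) l₂ t * (1 - t ^ 2) ^ (lam + 1 / 2 : ℝ)) *
        contig lam hlam l₁ hl t
    have h0 : (lam + (l₁ : ℝ)) * ∫ t in (-1 : ℝ)..1,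
        gegenbauer lam l₁ t * gegenbauer (lam + 1) l₂ t * (1 - t ^ 2) ^ (lam + 1 / 2 : ℝ)
          = 0 := by
      rw [← intervalIntegral.integral_const_mul, key,
        intervalIntegral.integral_sub ((hc l₁).intervalIntegrable _ _)
          ((hc (l₁ - 2)).intervalIntegrable _ _),
        intervalIntegral.integral_const_mul, intervalIntegral.integral_const_mul,
        horth l₁ h₁.symm, horth (l₁ - 2) (by omega)]
      ring
    exact (mul_eq_zero.mp h0).resolve_left hne
  · have key : (fun t : ℝ => (lam + (l₁ : ℝ)) * (gegenbauer lam l₁ t * gegenbauer (lam + 1) l₂ t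
        * (1 - t ^ 2) ^ (lam + 1 / 2 : ℝ)))
        = fun t : ℝ => lam * (gegenbauer (lam + 1) l₁ t * gegenbauer (lam + 1) l₂ t
            * (1 - t ^ 2) ^ (lam + 1 / 2 : ℝ)) := by
      funext t
      linear_combination (gegenbauer (lam + 1) l₂ t * (1 - t ^ 2) ^ (lam + 1 / 2 : ℝ)) *
        contig_small lam hlam l₁ (by omega) t
    have h0 : (lam + (l₁ : ℝ)) * ∫ t in (-1 : ℝ)..1,
        gegenbauer lam l₁ t * gegenbauer (lam + 1) l₂ t * (1 - t ^ 2) ^ (lam + 1 / 2 : ℝ)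
          = 0 := by
      rw [← intervalIntegral.integral_const_mul, key,
        intervalIntegral.integral_const_mul, horth l₁ h₁.symm]
      ring
    exact (mul_eq_zero.mp h0).resolve_left hne
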